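/- arXiv:2209.04373 — 6 statements merged into one kernel-verified Lean document; each statement's English description precedes it below -/
import Mathlib

section
/- For vectors x, y in ℝ^n, x is weakly supermajorized by y if and only if there exists u in ℝ^n with u majorized by y and u ≤ x componentwise. -/
open Finset

/-- Nondecreasing rearrangement of a finite vector. -/
def sortAsc {n : ℕ} {α : Type*} [LinearOrder α] (x : Fin n → α) : Fin n → α :=
  x ∘ Tuple.sort x

/-- Nonincreasing rearrangement of a finite vector. -/
def sortDesc {n : ℕ} {α : Type*} [LinearOrder α] (x : Fin n → α) : Fin n → α :=
  fun i => sortAsc x i.rev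

/-- Sum of the entries of `f` at positions `< k`. -/
def psum {n : ℕ} {α : Type*} [AddCommMonoid α] (f : Fin n → α) (k : ℕ) : α :=
  ∑ i : Fin n, if (i : ℕ) < k then f i else 0

/-- `x` is majorized by `y`: every partial sum of the `k` largest entries of `x`
is at most that of `y`, and the total sums agree. -/
def Maj {n : ℕ} {α : Type*} [AddCommMonoid α] [LinearOrder α] [IsOrderedAddMonoid α] (x y : Fin n → α) : Prop :=
  (∀ k : ℕ, psum (sortDesc x) k ≤ psum (sortDesc y) k) ∧ (∑ i, x i) = ∑ i, y i

/-- Weak submajorization: the sum of the `k` largest entries of `x` is at most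
that of `y`, for every `k`. -/
def WeakSub {n : ℕ} {α : Type*} [AddCommMonoid α] [LinearOrder α] [IsOrderedAddMonoid α] (x y : Fin n → α) : Prop :=
  ∀ k : ℕ, psum (sortDesc x) k ≤ psum (sortDesc y) k

/-- Weak supermajorization: the sum of the `k` smallest entries of `x` is at least
that of `y`, for every `k`. -/
def WeakSuper {n : ℕ} {α : Type*} [AddCommMonoid α] [LinearOrder α] [IsOrderedAddMonoid α] (x y : Fin n → α) : Prop :=
  ∀ k : ℕ, psum (sortAsc y) k ≤ psum (sortAsc x) k

section aux
variable {n : ℕ}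

lemma psum_total (f : Fin n → ℝ) {k : ℕ} (hk : n ≤ k) : psum f k = ∑ i, f i := by
  unfold psum
  refine Finset.sum_congr rfl fun i _ => if_pos (lt_of_lt_of_le i.2 hk)

lemma sum_sortAsc (f : Fin n → ℝ) : ∑ i, sortAsc f i = ∑ i, f i :=
  Equiv.sum_comp (Tuple.sort f) f

lemma count_sum (t : ℝ) {c m : ℕ} (hm : m ≤ n) :
    ∑ i : Fin n, (if c ≤ (i : ℕ) ∧ (i : ℕ) < m then t else 0) = ((m - c : ℕ) : ℝ) * t := by
  rw [Fin.sum_univ_eq_sum_range (fun i => if c ≤ i ∧ i < m then t else 0) n,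
    Finset.sum_ite, Finset.sum_const_zero, add_zero, Finset.sum_const]
  have : (Finset.range n).filter (fun i => c ≤ i ∧ i < m) = Finset.Ico c m := by
    ext i; simp [Finset.mem_Ico]; omega
  rw [this, Nat.card_Ico, nsmul_eq_mul]

lemma psum_rev_add (g : Fin n → ℝ) (k : ℕ) :
    psum (fun i => g i.rev) k + psum g (n - k) = ∑ i, g i := by
  unfold psum
  have h1 : ∑ i : Fin n, (if (i : ℕ) < k then g i.rev else 0)
      = ∑ j : Fin n, (if n - k ≤ (j : ℕ) then g j else 0) := by
    refine Fintype.sum_bijective Fin.rev Fin.rev_bijective _ _ (fun j => ?_)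
    rw [Fin.val_rev]
    have hj := j.2
    by_cases h : (j : ℕ) < k
    · rw [if_pos h, if_pos (by omega)]
    · rw [if_neg h, if_neg (by omega)]
  rw [h1, ← Finset.sum_add_distrib]
  refine Finset.sum_congr rfl fun j _ => ?_
  have hj := j.2
  by_cases h : (j : ℕ) < n - k
  · rw [if_neg (by omega), if_pos h, zero_add]
  · rw [if_pos (by omega), if_neg h, add_zero]


lemma psum_castLE (f : Fin n → ℝ) {k : ℕ} (hk : k ≤ n) :
    psum f k = ∑ i : Fin k, f (Fin.castLE hk i) := by
  classical
  have e1 : psum f k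
      = ∑ m ∈ Finset.range n, (fun m => if h : m < n then (if m < k then f ⟨m, h⟩ else 0) else 0) m := by
    rw [psum, ← Fin.sum_univ_eq_sum_range]
    refine Finset.sum_congr rfl fun i _ => ?_
    rw [dif_pos i.2]
  have e2 : ∑ i : Fin k, f (Fin.castLE hk i)
      = ∑ m ∈ Finset.range k, (fun m => if h : m < n then (if m < k then f ⟨m, h⟩ else 0) else 0) m := by
    rw [← Fin.sum_univ_eq_sum_range]
    refine Finset.sum_congr rfl fun i _ => ?_
    rw [dif_pos (lt_of_lt_of_le i.2 hk), if_pos i.2]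
    rfl
  rw [e1, e2]
  refine (Finset.sum_subset (Finset.range_subset_range.2 hk) fun m _ hm => ?_).symm
  simp only [Finset.mem_range, not_lt] at hm
  by_cases h : m < n
  · rw [dif_pos h, if_neg (by omega)]
  · rw [dif_neg h]

lemma strictMono_val_le {k : ℕ} {g : Fin k → Fin n} (hg : StrictMono g) (i : Fin k) :
    (i : ℕ) ≤ (g i : ℕ) := by
  have key : ∀ m : ℕ, ∀ i : Fin k, (i : ℕ) = m → m ≤ (g i : ℕ) := by
    intro m
    induction m with
    | zero => exact fun i _ => Nat.zero_le _
    | succ m ih =>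
      intro i hi
      have hm : m < k := by omega
      have h1 : (⟨m, hm⟩ : Fin k) < i := by
        rw [Fin.lt_def]; show m < (i : ℕ); omega
      have h2 := hg h1
      have h3 := ih ⟨m, hm⟩ rfl
      rw [Fin.lt_def] at h2
      omega
  exact key _ i rfl

lemma psum_mono_le_subset {v : Fin n → ℝ} (hv : Monotone v) {k : ℕ} (hk : k ≤ n)
    (B : Finset (Fin n)) (hB : B.card = k) : psum v k ≤ ∑ i ∈ B, v i := by
  have hmono : StrictMono (fun i : Fin k => ((B.orderIsoOfFin hB i : B) : Fin n)) :=
    fun i j hij => (B.orderIsoOfFin hB).strictMono hij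
  have e1 : ∑ i ∈ B, v i = ∑ i : Fin k, v (B.orderIsoOfFin hB i) := by
    rw [← Finset.sum_coe_sort B v]
    exact (Equiv.sum_comp (B.orderIsoOfFin hB).toEquiv (fun x : B => v x)).symm
  rw [e1, psum_castLE v hk]
  refine Finset.sum_le_sum fun i _ => hv ?_
  rw [Fin.le_def]
  exact strictMono_val_le hmono i

lemma psum_sortAsc_le_subset (u : Fin n → ℝ) {k : ℕ} (hk : k ≤ n)
    (A : Finset (Fin n)) (hA : A.card = k) : psum (sortAsc u) k ≤ ∑ i ∈ A, u i := by
  have e1 : ∑ j ∈ A.image (Tuple.sort u).symm, sortAsc u j = ∑ i ∈ A, u i := by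
    rw [Finset.sum_image (fun a _ b _ h => (Tuple.sort u).symm.injective h)]
    refine Finset.sum_congr rfl fun i _ => ?_
    show u (Tuple.sort u ((Tuple.sort u).symm i)) = u i
    rw [Equiv.apply_symm_apply]
  rw [← e1]
  refine psum_mono_le_subset (Tuple.monotone_sort u) hk _ ?_
  rw [Finset.card_image_of_injective _ (Tuple.sort u).symm.injective, hA]

lemma psum_sortAsc_mono {u x : Fin n → ℝ} (h : u ≤ x) (k : ℕ) :
    psum (sortAsc u) k ≤ psum (sortAsc x) k := by
  by_cases hk : k ≤ n
  · set A : Finset (Fin n) :=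
      Finset.image (fun i : Fin k => Tuple.sort x (Fin.castLE hk i)) Finset.univ with hA
    have hcard : A.card = k := by
      rw [hA, Finset.card_image_of_injective _
        (fun a b hab => Fin.castLE_injective hk ((Tuple.sort x).injective hab)),
        Finset.card_univ, Fintype.card_fin]
    have e1 : ∑ i ∈ A, x i = psum (sortAsc x) k := by
      rw [hA, Finset.sum_image (fun a _ b _ hab =>
        Fin.castLE_injective hk ((Tuple.sort x).injective hab)), psum_castLE _ hk]
      rfl
    calc psum (sortAsc u) k ≤ ∑ i ∈ A, u i := psum_sortAsc_le_subset u hk A hcard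
      _ ≤ ∑ i ∈ A, x i := Finset.sum_le_sum fun i _ => h i
      _ = psum (sortAsc x) k := e1
  · rw [psum_total _ (le_of_not_ge hk), psum_total _ (le_of_not_ge hk), sum_sortAsc, sum_sortAsc]
    exact Finset.sum_le_sum fun i _ => h i

lemma maj_iff (u y : Fin n → ℝ) :
    Maj u y ↔ ((∀ m : ℕ, psum (sortAsc y) m ≤ psum (sortAsc u) m) ∧ (∑ i, u i) = ∑ i, y i) := by
  have hrevu : ∀ k, psum (sortDesc u) k + psum (sortAsc u) (n - k) = ∑ i, u i := by
    intro k
    have := psum_rev_add (sortAsc u) k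
    rw [sum_sortAsc] at this
    exact this
  have hrevy : ∀ k, psum (sortDesc y) k + psum (sortAsc y) (n - k) = ∑ i, y i := by
    intro k
    have := psum_rev_add (sortAsc y) k
    rw [sum_sortAsc] at this
    exact this
  constructor
  · rintro ⟨h1, h2⟩
    refine ⟨fun m => ?_, h2⟩
    by_cases hm : m ≤ n
    · have hk := h1 (n - m)
      have e1 := hrevu (n - m)
      have e2 := hrevy (n - m)
      have hnm : n - (n - m) = m := by omega
      rw [hnm] at e1 e2
      linarith
    · rw [psum_total _ (by omega), psum_total _ (by omega), sum_sortAsc, sum_sortAsc, h2]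
  · rintro ⟨h1, h2⟩
    refine ⟨fun k => ?_, h2⟩
    have e1 := hrevu k
    have e2 := hrevy k
    have := h1 (n - k)
    linarith


lemma core {a b : Fin n → ℝ} (ha : Monotone a) (hb : Monotone b)
    (hab : ∀ k, psum b k ≤ psum a k) {t : ℝ}
    (ht : ∑ i, min (a i) t = ∑ i, b i) (m : ℕ) :
    psum b m ≤ psum (fun i => min (a i) t) m := by
  classical
  have htotmin : psum (fun i => min (a i) t) n = ∑ i, b i := by
    rw [psum_total _ le_rfl, ht]
  set P : ℕ → Prop := fun k => ∀ h : k < n, t < a ⟨k, h⟩ with hP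
  have hPn : P n := fun h => absurd h (lt_irrefl n)
  set j : ℕ := Nat.find ⟨n, hPn⟩ with hj
  have hjn : j ≤ n := Nat.find_le hPn
  have hj_hi : ∀ i : Fin n, j ≤ (i : ℕ) → t < a i := by
    intro i hi
    have hjlt : j < n := lt_of_le_of_lt hi i.2
    have := Nat.find_spec (⟨n, hPn⟩ : ∃ k, P k) hjlt
    exact lt_of_lt_of_le this (ha (by rw [Fin.le_def]; exact hi))
  have hj_lo : ∀ i : Fin n, (i : ℕ) < j → a i ≤ t := by
    intro i hi
    have hnot := Nat.find_min (⟨n, hPn⟩ : ∃ k, P k) hi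
    refine le_of_not_gt fun hlt => hnot fun h' => ?_
    exact lt_of_lt_of_le hlt (le_of_eq (congrArg a (Fin.eta i h').symm))
  have hmin : ∀ i : Fin n, min (a i) t = if (i : ℕ) < j then a i else t := by
    intro i
    by_cases h : (i : ℕ) < j
    · rw [if_pos h, min_eq_left (hj_lo i h)]
    · rw [if_neg h, min_eq_right (le_of_lt (hj_hi i (le_of_not_gt h)))]
  have hsplit : ∀ m' : ℕ, m' ≤ n → psum (fun i => min (a i) t) m'
      = psum a (min j m') + ((m' - min j m' : ℕ) : ℝ) * t := by
    intro m' hm'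
    have e1 : psum (fun i => min (a i) t) m'
        = ∑ i : Fin n, ((if (i : ℕ) < min j m' then a i else 0)
          + (if min j m' ≤ (i : ℕ) ∧ (i : ℕ) < m' then t else 0)) := by
      rw [psum]
      refine Finset.sum_congr rfl fun i _ => ?_
      rw [hmin i]
      by_cases h1 : (i : ℕ) < m'
      · rw [if_pos h1]
        by_cases h2 : (i : ℕ) < j
        · rw [if_pos h2, if_pos (lt_min h2 h1), if_neg (by omega), add_zero]
        · rw [if_neg h2, if_neg (by omega), if_pos (by omega), zero_add]
      · rw [if_neg h1, if_neg (by omega), if_neg (by omega), add_zero]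
    rw [e1, Finset.sum_add_distrib, count_sum t hm']
    rfl
  by_cases hm : n ≤ m
  · rw [psum_total _ hm, psum_total _ hm, ht]
  push_neg at hm
  have htot : psum a j + ((n - j : ℕ) : ℝ) * t = ∑ i, b i := by
    rw [← htotmin, hsplit n le_rfl, min_eq_left hjn]
  rw [hsplit m (le_of_lt hm)]
  by_cases hjm : m ≤ j
  · rw [min_eq_right hjm, Nat.sub_self, Nat.cast_zero, zero_mul, add_zero]
    exact hab m
  push_neg at hjm
  rw [min_eq_left (le_of_lt hjm)]
  -- now j < m < n
  set c0 : ℝ := b ⟨m, hm⟩ with hc0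
  have F1 : psum b m + ((n - m : ℕ) : ℝ) * c0 ≤ ∑ i, b i := by
    have e1 : ∑ i, b i = psum b m + ∑ i : Fin n, (if m ≤ (i : ℕ) ∧ (i : ℕ) < n then b i else 0) := by
      rw [psum, ← Finset.sum_add_distrib]
      refine Finset.sum_congr rfl fun i _ => ?_
      have hi := i.2
      by_cases h : (i : ℕ) < m
      · rw [if_pos h, if_neg (by omega), add_zero]
      · rw [if_neg h, if_pos (by omega), zero_add]
    have e2 : ((n - m : ℕ) : ℝ) * c0
        ≤ ∑ i : Fin n, (if m ≤ (i : ℕ) ∧ (i : ℕ) < n then b i else 0) := by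
      rw [← count_sum c0 (le_refl n)]
      refine Finset.sum_le_sum fun i _ => ?_
      by_cases h : m ≤ (i : ℕ) ∧ (i : ℕ) < n
      · rw [if_pos h, if_pos h]
        exact hb (by rw [Fin.le_def]; exact h.1)
      · rw [if_neg h, if_neg h]
    linarith
  have F2 : psum b m ≤ psum b j + ((m - j : ℕ) : ℝ) * c0 := by
    have e1 : psum b m = psum b j + ∑ i : Fin n, (if j ≤ (i : ℕ) ∧ (i : ℕ) < m then b i else 0) := by
      rw [psum, psum, ← Finset.sum_add_distrib]
      refine Finset.sum_congr rfl fun i _ => ?_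
      by_cases h1 : (i : ℕ) < j
      · rw [if_pos h1, if_pos (by omega), if_neg (by omega), add_zero]
      · by_cases h2 : (i : ℕ) < m
        · rw [if_pos h2, if_neg h1, if_pos (by omega), zero_add]
        · rw [if_neg h2, if_neg h1, if_neg (by omega), add_zero]
    have e2 : ∑ i : Fin n, (if j ≤ (i : ℕ) ∧ (i : ℕ) < m then b i else 0)
        ≤ ((m - j : ℕ) : ℝ) * c0 := by
      rw [← count_sum c0 (le_of_lt hm)]
      refine Finset.sum_le_sum fun i _ => ?_
      by_cases h : j ≤ (i : ℕ) ∧ (i : ℕ) < m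
      · rw [if_pos h, if_pos h]
        exact hb (by rw [Fin.le_def]; exact le_of_lt h.2)
      · rw [if_neg h, if_neg h]
    linarith
  have hbj := hab j
  have hcast : ((n - j : ℕ) : ℝ) = ((n - m : ℕ) : ℝ) + ((m - j : ℕ) : ℝ) := by
    have : (n - j : ℕ) = (n - m : ℕ) + (m - j : ℕ) := by omega
    rw [this, Nat.cast_add]
  rw [hcast, add_mul] at htot
  by_cases htc : t ≤ c0
  · have h1 : ((n - m : ℕ) : ℝ) * t ≤ ((n - m : ℕ) : ℝ) * c0 :=
      mul_le_mul_of_nonneg_left htc (Nat.cast_nonneg _)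
    linarith
  · push_neg at htc
    have h2 : ((m - j : ℕ) : ℝ) * c0 ≤ ((m - j : ℕ) : ℝ) * t :=
      mul_le_mul_of_nonneg_left (le_of_lt htc) (Nat.cast_nonneg _)
    linarith

end aux

theorem stmt_0 {n : ℕ} (x y : Fin n → ℝ) :
    WeakSuper x y ↔ ∃ u : Fin n → ℝ, Maj u y ∧ u ≤ x := by
  constructor
  · intro h
    rcases Nat.eq_zero_or_pos n with hn | hn
    · subst hn
      refine ⟨x, ?_, le_rfl⟩
      rw [maj_iff]
      refine ⟨fun m => ?_, ?_⟩ <;> simp [psum]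
    · set a : Fin n → ℝ := sortAsc x with ha_def
      set b : Fin n → ℝ := sortAsc y with hb_def
      have ha : Monotone a := Tuple.monotone_sort x
      have hb : Monotone b := Tuple.monotone_sort y
      have hab : ∑ i, b i ≤ ∑ i, a i := by
        have := h n
        rwa [psum_total _ le_rfl, psum_total _ le_rfl] at this
      have hne : (Finset.univ : Finset (Fin n)).Nonempty := ⟨⟨0, hn⟩, Finset.mem_univ _⟩
      set M := Finset.univ.sup' hne a with hM
      set T0 := Finset.univ.inf' hne a with hT0
      set T := min T0 ((∑ i, b i) / n) with hT
      have hf : Continuous (fun t : ℝ => ∑ i, min (a i) t) := by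
        apply continuous_finset_sum
        intro i _
        exact continuous_const.min continuous_id
      have hfT : ∑ i, min (a i) T ≤ ∑ i, b i := by
        have he : ∀ i, min (a i) T = T := fun i =>
          min_eq_right (le_trans (min_le_left _ _) (Finset.inf'_le _ (Finset.mem_univ i)))
        rw [Finset.sum_congr rfl fun i _ => he i, Finset.sum_const, Finset.card_univ,
          Fintype.card_fin, nsmul_eq_mul]
        have hn' : (0:ℝ) < n := by exact_mod_cast hn
        calc (n:ℝ) * T ≤ (n:ℝ) * ((∑ i, b i) / n) :=
              mul_le_mul_of_nonneg_left (min_le_right _ _) (Nat.cast_nonneg _)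
          _ = ∑ i, b i := mul_div_cancel₀ _ (ne_of_gt hn')
      have hfM : ∑ i, b i ≤ ∑ i, min (a i) M := by
        have he : ∀ i, min (a i) M = a i := fun i =>
          min_eq_left (Finset.le_sup' _ (Finset.mem_univ i))
        rw [Finset.sum_congr rfl fun i _ => he i]
        exact hab
      have hTM : T ≤ M :=
        le_trans (min_le_left _ _)
          (le_trans (Finset.inf'_le _ (Finset.mem_univ (⟨0, hn⟩ : Fin n)))
            (Finset.le_sup' _ (Finset.mem_univ (⟨0, hn⟩ : Fin n))))
      obtain ⟨t, _, htt⟩ := intermediate_value_Icc hTM hf.continuousOn (Set.mem_Icc.mpr ⟨hfT, hfM⟩)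
      simp only at htt
      -- htt : ∑ i, min (a i) t = ∑ i, b i
      set u : Fin n → ℝ := fun i => min (x i) t with hu
      have hmono : Monotone (u ∘ ⇑(Tuple.sort x)) := by
        intro i j hij
        exact min_le_min (Tuple.monotone_sort x hij) le_rfl
      have hsort : sortAsc u = fun i => min (a i) t := by
        have hcs := Tuple.comp_sort_eq_comp_iff_monotone.mpr hmono
        exact hcs.symm
      refine ⟨u, ?_, fun i => min_le_left _ _⟩
      rw [maj_iff]
      have hsum_u : ∑ i, u i = ∑ i, y i := by
        rw [← sum_sortAsc u, hsort]
        rw [htt, hb_def, sum_sortAsc]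
      refine ⟨fun m => ?_, hsum_u⟩
      rw [hsort, hb_def] at *
      exact core ha hb h htt m
  · rintro ⟨u, hmaj, hux⟩
    rw [maj_iff] at hmaj
    intro k
    exact le_trans (hmaj.1 k) (psum_sortAsc_mono hux k)
end

section
/- For any x, y ∈ ℝ^n, the vector x↓ − y↓ is majorized by the vector x↓ − y, where subtraction is componentwise. -/
open Finset

section Aux

variable {n : ℕ}

lemma sortAsc_comp_perm' (v : Fin n → ℝ) (σ : Equiv.Perm (Fin n)) :
    sortAsc (v ∘ σ) = sortAsc v := by
  unfold sortAsc
  exact Tuple.comp_perm_comp_sort_eq_comp_sort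

lemma sortDesc_comp_perm' (v : Fin n → ℝ) (σ : Equiv.Perm (Fin n)) :
    sortDesc (v ∘ σ) = sortDesc v := by
  funext i
  simp [sortDesc, sortAsc_comp_perm']

lemma exists_perm_sortDesc' (v : Fin n → ℝ) :
    ∃ σ : Equiv.Perm (Fin n), sortDesc v = v ∘ σ :=
  ⟨Fin.revPerm.trans (Tuple.sort v), rfl⟩

lemma sortDesc_antitone' (v : Fin n → ℝ) : Antitone (sortDesc v) := by
  intro i j hij
  exact Tuple.monotone_sort v (Fin.rev_le_rev.mpr hij)

lemma sortDesc_eq_self' {v : Fin n → ℝ} (hv : Antitone v) : sortDesc v = v := by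
  have h1 : Monotone (v ∘ Fin.revPerm) := fun i j hij => hv (Fin.rev_le_rev.mpr hij)
  have h2 : sortAsc (v ∘ Fin.revPerm) = v ∘ Fin.revPerm := by
    unfold sortAsc
    rw [Tuple.sort_eq_refl_iff_monotone.mpr h1]
    rfl
  have h3 : sortAsc v = v ∘ Fin.revPerm := by
    rw [← sortAsc_comp_perm' v Fin.revPerm, h2]
  funext i
  simp [sortDesc, h3, Fin.rev_rev]

lemma psum_eq_sum_filter' {α : Type*} [AddCommMonoid α] (f : Fin n → α) (k : ℕ) :
    psum f k = ∑ i ∈ univ.filter (fun i : Fin n => (i : ℕ) < k), f i :=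
  (Finset.sum_filter _ _).symm

lemma filter_lt_eq_image' (k : ℕ) :
    univ.filter (fun i : Fin n => (i : ℕ) < k)
      = Finset.image (Fin.castLE (min_le_right k n)) univ := by
  ext a
  simp only [mem_filter, mem_univ, true_and, mem_image]
  constructor
  · intro h
    exact ⟨⟨a, lt_min h a.2⟩, rfl⟩
  · rintro ⟨b, rfl⟩
    exact lt_of_lt_of_le b.2 (min_le_left _ _)

lemma card_filter_lt' (k : ℕ) :
    (univ.filter (fun i : Fin n => (i : ℕ) < k)).card = min k n := by
  rw [filter_lt_eq_image', Finset.card_image_of_injective _ (Fin.castLE_injective _)]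
  simp

lemma le_apply_strictMono' {m : ℕ} (f : Fin m → Fin n) (hf : StrictMono f) (i : Fin m) :
    (i : ℕ) ≤ f i := by
  suffices H : ∀ q (hq : q < m), q ≤ (f ⟨q, hq⟩ : ℕ) by
    simpa using H i i.2
  intro q
  induction q with
  | zero => exact fun _ => Nat.zero_le _
  | succ p ih =>
    intro hq
    have hp : p < m := Nat.lt_of_succ_lt hq
    have h1 : f ⟨p, hp⟩ < f ⟨p + 1, hq⟩ := hf (by simp [Fin.lt_def])
    have := ih hp
    omega

lemma sum_le_psum_of_antitone' {w : Fin n → ℝ} (hw : Antitone w) (t : Finset (Fin n)) (k : ℕ)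
    (ht : t.card = min k n) : ∑ i ∈ t, w i ≤ psum w k := by
  rw [psum_eq_sum_filter', filter_lt_eq_image',
    Finset.sum_image (fun a _ b _ hab => Fin.castLE_injective _ hab)]
  have himg : Finset.image (t.orderEmbOfFin ht) univ = t := by
    apply Finset.coe_injective
    rw [Finset.coe_image, Finset.coe_univ, Set.image_univ, Finset.range_orderEmbOfFin]
  conv_lhs => rw [← himg]
  rw [Finset.sum_image (fun a _ b _ hab => (t.orderEmbOfFin ht).injective hab)]
  apply Finset.sum_le_sum
  intro i _
  apply hw
  have := le_apply_strictMono' _ (t.orderEmbOfFin ht).strictMono i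
  rw [Fin.le_def]
  simpa using this

lemma sum_le_psum_sortDesc' (v : Fin n → ℝ) (s : Finset (Fin n)) (k : ℕ)
    (hs : s.card = min k n) : ∑ i ∈ s, v i ≤ psum (sortDesc v) k := by
  obtain ⟨σ, hσ⟩ := exists_perm_sortDesc' v
  have hsum : ∑ i ∈ s.image σ.symm, sortDesc v i = ∑ i ∈ s, v i := by
    rw [hσ, Finset.sum_image (fun a _ b _ hab => σ.symm.injective hab)]
    apply Finset.sum_congr rfl
    intro i _
    simp
  rw [← hsum]
  exact sum_le_psum_of_antitone' (sortDesc_antitone' v) _ k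
    (by rw [Finset.card_image_of_injective _ σ.symm.injective, hs])

lemma psum_sortDesc_eq' (v : Fin n → ℝ) (k : ℕ) :
    ∃ s : Finset (Fin n), s.card = min k n ∧ psum (sortDesc v) k = ∑ i ∈ s, v i := by
  obtain ⟨σ, hσ⟩ := exists_perm_sortDesc' v
  refine ⟨(univ.filter (fun i : Fin n => (i : ℕ) < k)).image σ, ?_, ?_⟩
  · rw [Finset.card_image_of_injective _ σ.injective, card_filter_lt']
  · rw [psum_eq_sum_filter', Finset.sum_image (fun a _ b _ hab => σ.injective hab), hσ]
    rfl

lemma psum_swap_le' {u u' : Fin n → ℝ} {i j : Fin n} (hij : i ≠ j)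
    (hoff : ∀ l, l ≠ i → l ≠ j → u' l = u l)
    (hsum : u' i + u' j = u i + u j)
    (hi : u' i ≤ max (u i) (u j)) (hj : u' j ≤ max (u i) (u j)) (k : ℕ) :
    psum (sortDesc u') k ≤ psum (sortDesc u) k := by
  obtain ⟨s, hcard, hval⟩ := psum_sortDesc_eq' u' k
  rw [hval]
  by_cases his : i ∈ s <;> by_cases hjs : j ∈ s
  · -- both in s : sums agree on s
    have hjs' : j ∈ s.erase i := Finset.mem_erase.mpr ⟨hij.symm, hjs⟩
    have hs : ∑ l ∈ s, u' l = ∑ l ∈ s, u l := by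
      rw [← Finset.add_sum_erase _ _ his, ← Finset.add_sum_erase _ _ hjs',
        ← Finset.add_sum_erase _ u his, ← Finset.add_sum_erase _ u hjs']
      have hrest : ∑ l ∈ (s.erase i).erase j, u' l = ∑ l ∈ (s.erase i).erase j, u l := by
        apply Finset.sum_congr rfl
        intro l hl
        have h1 := (Finset.mem_erase.mp hl).1
        have h2 := (Finset.mem_erase.mp (Finset.mem_erase.mp hl).2).1
        exact hoff l h2 h1
      rw [hrest]
      ring_nf
      linarith [hsum]
    rw [hs]
    exact sum_le_psum_sortDesc' u s k hcard
  · -- i ∈ s, j ∉ s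
    have hrest : ∑ l ∈ s.erase i, u' l = ∑ l ∈ s.erase i, u l := by
      apply Finset.sum_congr rfl
      intro l hl
      exact hoff l (Finset.mem_erase.mp hl).1 (fun h => hjs (h ▸ Finset.mem_of_mem_erase hl))
    have hdec : ∑ l ∈ s, u' l = u' i + ∑ l ∈ s.erase i, u l := by
      rw [← Finset.add_sum_erase _ _ his, hrest]
    rcases le_total (u j) (u i) with h | h
    · have : ∑ l ∈ s, u' l ≤ ∑ l ∈ s, u l := by
        rw [hdec, ← Finset.add_sum_erase _ u his]
        have := max_eq_left h
        linarith [hi, this ▸ hi]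
      exact le_trans this (sum_le_psum_sortDesc' u s k hcard)
    · have hjne : j ∉ s.erase i := fun h => hjs (Finset.mem_of_mem_erase h)
      have hcard' : (insert j (s.erase i)).card = min k n := by
        rw [Finset.card_insert_of_notMem hjne, Finset.card_erase_of_mem his, hcard]
        have : 1 ≤ s.card := Finset.card_pos.mpr ⟨i, his⟩
        omega
      have : ∑ l ∈ s, u' l ≤ ∑ l ∈ insert j (s.erase i), u l := by
        rw [hdec, Finset.sum_insert hjne]
        have hm := max_eq_right h
        linarith [hm ▸ hi]
      exact le_trans this (sum_le_psum_sortDesc' u _ k hcard')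
  · -- j ∈ s, i ∉ s
    have hrest : ∑ l ∈ s.erase j, u' l = ∑ l ∈ s.erase j, u l := by
      apply Finset.sum_congr rfl
      intro l hl
      exact hoff l (fun h => his (h ▸ Finset.mem_of_mem_erase hl)) (Finset.mem_erase.mp hl).1
    have hdec : ∑ l ∈ s, u' l = u' j + ∑ l ∈ s.erase j, u l := by
      rw [← Finset.add_sum_erase _ _ hjs, hrest]
    rcases le_total (u i) (u j) with h | h
    · have : ∑ l ∈ s, u' l ≤ ∑ l ∈ s, u l := by
        rw [hdec, ← Finset.add_sum_erase _ u hjs]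
        have hm := max_eq_right h
        linarith [hm ▸ hj]
      exact le_trans this (sum_le_psum_sortDesc' u s k hcard)
    · have hine : i ∉ s.erase j := fun h => his (Finset.mem_of_mem_erase h)
      have hcard' : (insert i (s.erase j)).card = min k n := by
        rw [Finset.card_insert_of_notMem hine, Finset.card_erase_of_mem hjs, hcard]
        have : 1 ≤ s.card := Finset.card_pos.mpr ⟨j, hjs⟩
        omega
      have : ∑ l ∈ s, u' l ≤ ∑ l ∈ insert i (s.erase j), u l := by
        rw [hdec, Finset.sum_insert hine]
        have hm := max_eq_left h
        linarith [hm ▸ hj]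
      exact le_trans this (sum_le_psum_sortDesc' u _ k hcard')
  · -- neither
    have hs : ∑ l ∈ s, u' l = ∑ l ∈ s, u l := by
      apply Finset.sum_congr rfl
      intro l hl
      exact hoff l (fun h => his (h ▸ hl)) (fun h => hjs (h ▸ hl))
    rw [hs]
    exact sum_le_psum_sortDesc' u s k hcard

/-- Number of inversions (pairs out of nonincreasing order). -/
noncomputable def invCount' {n : ℕ} (z : Fin n → ℝ) : ℕ :=
  (univ.filter (fun p : Fin n × Fin n => p.1 < p.2 ∧ z p.1 < z p.2)).card

lemma invCount_swap_lt' {z : Fin n → ℝ} {i j : Fin n} (hadj : (i : ℕ) + 1 = (j : ℕ))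
    (hz : z i < z j) : invCount' (z ∘ Equiv.swap i j) < invCount' z := by
  classical
  set s := Equiv.swap i j with hs
  have hij : i < j := by rw [Fin.lt_def]; omega
  have hne : i ≠ j := ne_of_lt hij
  set A := univ.filter (fun p : Fin n × Fin n => p.1 < p.2 ∧ (z ∘ s) p.1 < (z ∘ s) p.2) with hA
  set B := univ.filter (fun p : Fin n × Fin n => p.1 < p.2 ∧ z p.1 < z p.2) with hB
  have hmem : (i, j) ∈ B := by
    simp only [hB, mem_filter, mem_univ, true_and]
    exact ⟨hij, hz⟩
  have hinj : Function.Injective (fun p : Fin n × Fin n => (s p.1, s p.2)) := by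
    intro p q h
    rw [Prod.ext_iff] at h ⊢
    exact ⟨s.injective h.1, s.injective h.2⟩
  have himage : A.image (fun p => (s p.1, s p.2)) ⊆ B.erase (i, j) := by
    intro q hq
    obtain ⟨p, hp, rfl⟩ := Finset.mem_image.mp hq
    simp only [hA, mem_filter, mem_univ, true_and, Function.comp_apply] at hp
    obtain ⟨hlt, hval⟩ := hp
    have hpne : p ≠ (i, j) := by
      rintro rfl
      simp only [Equiv.swap_apply_left, Equiv.swap_apply_right, hs] at hval
      exact absurd hval (not_lt.mpr hz.le)
    have hltv : (p.1 : ℕ) < (p.2 : ℕ) := hlt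
    have key : s p.1 < s p.2 := by
      rcases eq_or_ne p.1 i with h1 | h1 <;> rcases eq_or_ne p.2 j with h2 | h2
      · exact absurd (Prod.ext h1 h2) hpne
      · have h2i : p.2 ≠ i := by
          intro hh
          rw [h1, hh] at hlt
          exact lt_irrefl _ hlt
        rw [h1, hs, Equiv.swap_apply_left, Equiv.swap_apply_of_ne_of_ne h2i h2]
        rw [Fin.lt_def]
        rw [h1] at hltv
        simp only [Fin.ne_iff_vne] at h2
        omega
      · have h1j : p.1 ≠ j := by
          intro hh
          rw [h2, hh] at hlt
          exact lt_irrefl _ hlt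
        rw [h2, hs, Equiv.swap_apply_right, Equiv.swap_apply_of_ne_of_ne h1 h1j]
        rw [Fin.lt_def]
        rw [h2] at hltv
        simp only [Fin.ne_iff_vne] at h1
        omega
      · rcases eq_or_ne p.1 j with h1j | h1j
        · have h2i : p.2 ≠ i := by
            intro hh
            rw [h1j] at hltv
            rw [hh] at hltv
            omega
          rw [h1j, hs, Equiv.swap_apply_right, Equiv.swap_apply_of_ne_of_ne h2i h2]
          rw [Fin.lt_def]
          rw [h1j] at hltv
          omega
        · rcases eq_or_ne p.2 i with h2i | h2i
          · rw [h2i, hs, Equiv.swap_apply_left, Equiv.swap_apply_of_ne_of_ne h1 h1j]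
            rw [Fin.lt_def]
            rw [h2i] at hltv
            simp only [Fin.ne_iff_vne] at h1
            omega
          · rw [hs, Equiv.swap_apply_of_ne_of_ne h1 h1j,
              Equiv.swap_apply_of_ne_of_ne h2i h2]
            exact hlt
    refine Finset.mem_erase.mpr ⟨?_, ?_⟩
    · intro hh
      rw [Prod.ext_iff] at hh
      have e1 : p.1 = j := by
        have := congrArg s hh.1
        simpa [hs, Equiv.swap_apply_left] using this
      have e2 : p.2 = i := by
        have := congrArg s hh.2
        simpa [hs, Equiv.swap_apply_right] using this
      rw [e1, e2] at hltv
      omega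
    · simp only [hB, mem_filter, mem_univ, true_and]
      exact ⟨key, hval⟩
  have h1 : invCount' (z ∘ s) = (A.image (fun p => (s p.1, s p.2))).card :=
    (Finset.card_image_of_injective _ hinj).symm
  have h2 : (A.image (fun p => (s p.1, s p.2))).card ≤ (B.erase (i, j)).card :=
    Finset.card_le_card himage
  have h3 : (B.erase (i, j)).card < B.card :=
    Finset.card_erase_lt_of_mem hmem
  calc invCount' (z ∘ s) = _ := h1
    _ ≤ _ := h2
    _ < B.card := h3

lemma antitone_or_adj' (z : Fin n → ℝ) :
    Antitone z ∨ ∃ i j : Fin n, (i : ℕ) + 1 = (j : ℕ) ∧ z i < z j := by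
  cases n with
  | zero => exact Or.inl (fun a _ _ => a.elim0)
  | succ m =>
    by_cases h : ∀ i : Fin m, z i.succ ≤ z i.castSucc
    · exact Or.inl (Fin.antitone_iff_succ_le.mpr h)
    · push_neg at h
      obtain ⟨i, hi⟩ := h
      exact Or.inr ⟨i.castSucc, i.succ, by simp, hi⟩

lemma invCount_pos_of_not_antitone' {z : Fin n → ℝ} (h : ¬ Antitone z) :
    0 < invCount' z := by
  rcases antitone_or_adj' z with h' | ⟨i, j, hadj, hz⟩
  · exact absurd h' h
  · apply Finset.card_pos.mpr
    refine ⟨(i, j), ?_⟩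
    simp only [mem_filter, mem_univ, true_and]
    exact ⟨by rw [Fin.lt_def]; omega, hz⟩

lemma main_lemma' (a : Fin n → ℝ) (ha : Antitone a) :
    ∀ N (z : Fin n → ℝ), invCount' z ≤ N → ∀ k,
      psum (sortDesc (fun i => a i - sortDesc z i)) k
        ≤ psum (sortDesc (fun i => a i - z i)) k := by
  intro N
  induction N with
  | zero =>
    intro z hz k
    by_cases hA : Antitone z
    · rw [sortDesc_eq_self' hA]
    · have := invCount_pos_of_not_antitone' hA
      omega
  | succ N ih =>
    intro z hz k
    by_cases hA : Antitone z
    · rw [sortDesc_eq_self' hA]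
    · rcases antitone_or_adj' z with h' | ⟨i, j, hadj, hzij⟩
      · exact absurd h' hA
      · have hijne : i ≠ j := Fin.ne_of_val_ne (by omega)
        have hijle : i ≤ j := Fin.le_def.mpr (by omega)
        set z' := z ∘ Equiv.swap i j with hz'
        have h1 : invCount' z' ≤ N :=
          Nat.lt_succ_iff.mp (lt_of_lt_of_le (invCount_swap_lt' hadj hzij) hz)
        have h2 : sortDesc z' = sortDesc z := sortDesc_comp_perm' z _
        calc psum (sortDesc (fun i' => a i' - sortDesc z i')) k
            = psum (sortDesc (fun i' => a i' - sortDesc z' i')) k := by rw [h2]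
          _ ≤ psum (sortDesc (fun i' => a i' - z' i')) k := ih z' h1 k
          _ ≤ psum (sortDesc (fun i' => a i' - z i')) k := by
              apply psum_swap_le' hijne
              · intro l hl1 hl2
                simp [hz', Equiv.swap_apply_of_ne_of_ne hl1 hl2]
              · simp only [hz', Function.comp_apply, Equiv.swap_apply_left,
                  Equiv.swap_apply_right]
                ring
              · simp only [hz', Function.comp_apply, Equiv.swap_apply_left]
                exact le_max_of_le_left (by linarith)
              · simp only [hz', Function.comp_apply, Equiv.swap_apply_right]
                exact le_max_of_le_left (by linarith [ha hijle])

end Aux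

theorem stmt_4 {n : ℕ} (x y : Fin n → ℝ) :
    Maj (fun i => sortDesc x i - sortDesc y i) (fun i => sortDesc x i - y i) := by
  constructor
  · intro k
    exact main_lemma' (sortDesc x) (sortDesc_antitone' x) (invCount' y) y le_rfl k
  · obtain ⟨σ, hσ⟩ := exists_perm_sortDesc' y
    have hsum : ∑ i, sortDesc y i = ∑ i, y i := by
      rw [hσ]
      exact Equiv.sum_comp σ y
    simp [Finset.sum_sub_distrib, hsum]
end

section
/- Let x, y ∈ ℕ^n with x ≺ y, and let (p_1,...,p_τ) and (q_1,...,q_τ) be sequences of pairwise-distinct indices in {1,...,n} (each sequence has distinct entries) with p_l ≥ q_l for all l. Then x↓ + Σ_l e_{p_l} is majorized by y↓ + Σ_l e_{q_l}. -/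
open Finset

/-- `Emt f t = ∑ i, (f i - t)` (truncated subtraction). -/
def Emt {n : ℕ} (f : Fin n → ℕ) (t : ℕ) : ℕ := ∑ i, (f i - t)

-- L0
lemma sum_comp_sortDesc {n : ℕ} (f : Fin n → ℕ) (g : ℕ → ℕ) :
    ∑ i, g (sortDesc f i) = ∑ i, g (f i) :=
  Fintype.sum_equiv ((Fin.revPerm).trans (Tuple.sort f)) _ _ (fun _ => rfl)

lemma Emt_sortDesc {n : ℕ} (f : Fin n → ℕ) (t : ℕ) : Emt (sortDesc f) t = Emt f t :=
  sum_comp_sortDesc f (· - t)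

-- L1
lemma antitone_sortDesc {n : ℕ} (f : Fin n → ℕ) : Antitone (sortDesc f) :=
  fun _i _j hij => Tuple.monotone_sort f (Fin.rev_le_rev.mpr hij)

-- card of prefix
lemma card_lt_filter {n m : ℕ} (hm : m ≤ n) :
    (univ.filter fun i : Fin n => (i : ℕ) < m).card = m := by
  rcases Nat.lt_or_ge m n with hmn | hmn
  · have : (univ.filter fun i : Fin n => (i : ℕ) < m) = Finset.Iio ⟨m, hmn⟩ := by
      ext j
      simp [Fin.lt_def]
    rw [this, Fin.card_Iio]
  · have : (univ.filter fun i : Fin n => (i : ℕ) < m) = univ :=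
      Finset.filter_true_of_mem (fun i _ => lt_of_lt_of_le i.isLt hmn)
    rw [this, Finset.card_univ, Fintype.card_fin]
    omega

-- L2
lemma antitone_ge_iff {n : ℕ} {d : Fin n → ℕ} (hd : Antitone d) (t : ℕ) (i : Fin n) :
    t ≤ d i ↔ (i : ℕ) < (univ.filter fun j => t ≤ d j).card := by
  constructor
  · intro hi
    have hsub : (univ.filter fun j : Fin n => (j : ℕ) < (i : ℕ) + 1) ⊆
        (univ.filter fun j => t ≤ d j) := by
      intro j hj
      simp only [mem_filter, mem_univ, true_and] at hj ⊢
      exact le_trans hi (hd (Fin.le_def.mpr (by omega)))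
    have hcard := Finset.card_le_card hsub
    have heq : (univ.filter fun j : Fin n => (j : ℕ) < (i : ℕ) + 1).card = (i : ℕ) + 1 :=
      card_lt_filter i.isLt
    omega
  · intro hi
    by_contra hcon
    have hsub : (univ.filter fun j => t ≤ d j) ⊆
        (univ.filter fun j : Fin n => (j : ℕ) < (i : ℕ)) := by
      intro j hj
      simp only [mem_filter, mem_univ, true_and] at hj ⊢
      by_contra hji
      exact hcon (le_trans hj (hd (Fin.le_def.mpr (by omega))))
    have hcard := Finset.card_le_card hsub
    have heq : (univ.filter fun j : Fin n => (j : ℕ) < (i : ℕ)).card = (i : ℕ) :=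
      card_lt_filter (le_of_lt i.isLt)
    omega

-- L3a : Emt at t vs t+1
lemma Emt_succ {n : ℕ} (f : Fin n → ℕ) (t : ℕ) :
    Emt f t = Emt f (t + 1) + (univ.filter fun i => t + 1 ≤ f i).card := by
  rw [Finset.card_filter, Emt, Emt, ← Finset.sum_add_distrib]
  apply Finset.sum_congr rfl
  intro i _
  split <;> omega

-- L4 : upper bound on top-k
lemma psum_le {n : ℕ} (f : Fin n → ℕ) (k t : ℕ) :
    psum (sortDesc f) k ≤ k * t + Emt f t := by
  rw [← Emt_sortDesc f t]
  set d := sortDesc f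
  have h1 : psum d k ≤ (∑ i : Fin n, if (i : ℕ) < k then t else 0) + Emt d t := by
    rw [Emt, ← Finset.sum_add_distrib]
    apply Finset.sum_le_sum
    intro i _
    split <;> omega
  have h2 : (∑ i : Fin n, if (i : ℕ) < k then t else 0) ≤ k * t := by
    rw [← Finset.sum_filter, Finset.sum_const, smul_eq_mul]
    have : (univ.filter fun i : Fin n => (i : ℕ) < k).card ≤ k := by
      by_cases hk : k ≤ n
      · exact le_of_eq (card_lt_filter hk)
      · calc _ ≤ (univ : Finset (Fin n)).card := Finset.card_filter_le _ _
          _ = n := Finset.card_univ.trans (Fintype.card_fin n)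
          _ ≤ k := by omega
    exact Nat.mul_le_mul_right t this
  omega

-- L5 : the bound is attained
lemma exists_psum_ge {n : ℕ} (f : Fin n → ℕ) (k : ℕ) :
    ∃ t, k * t + Emt f t ≤ psum (sortDesc f) k := by
  set d := sortDesc f with hd
  by_cases hk : n ≤ k
  · refine ⟨0, ?_⟩
    have : Emt f 0 = ∑ i, f i := by
      apply Finset.sum_congr rfl; intro i _; omega
    rw [this, Nat.mul_zero, Nat.zero_add]
    have : psum d k = ∑ i, d i := by
      apply Finset.sum_congr rfl
      intro i _
      rw [if_pos (by omega : (i : ℕ) < k)]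
    rw [this, show ∑ i, d i = ∑ i, f i from sum_comp_sortDesc f id]
  · push_neg at hk
    refine ⟨d ⟨k, hk⟩, ?_⟩
    rw [← Emt_sortDesc f _, ← hd]
    have hkt : k * d ⟨k, hk⟩ = ∑ i : Fin n, if (i : ℕ) < k then d ⟨k, hk⟩ else 0 := by
      rw [← Finset.sum_filter, Finset.sum_const, smul_eq_mul, card_lt_filter (le_of_lt hk)]
    rw [hkt, Emt, ← Finset.sum_add_distrib]
    apply Finset.sum_le_sum
    intro i _
    by_cases hik : (i : ℕ) < k
    · rw [if_pos hik, if_pos hik]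
      have : d ⟨k, hk⟩ ≤ d i := antitone_sortDesc f
        (by rw [Fin.le_def]; exact Nat.le_of_lt hik)
      omega
    · rw [if_neg hik, if_neg hik]
      have : d i ≤ d ⟨k, hk⟩ := antitone_sortDesc f
        (by rw [Fin.le_def]; exact Nat.le_of_not_lt hik)
      omega

-- L6 : weak submajorization implies E-domination
lemma Emt_le_of_weakSub {n : ℕ} {x y : Fin n → ℕ}
    (hw : ∀ k : ℕ, psum (sortDesc x) k ≤ psum (sortDesc y) k) (t : ℕ) :
    Emt (sortDesc x) t ≤ Emt (sortDesc y) t := by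
  set dx := sortDesc x with hdx
  set dy := sortDesc y with hdy
  set M := (univ.filter fun i : Fin n => t ≤ dx i).card with hM
  have hMn : M ≤ n := le_trans (Finset.card_filter_le _ _)
    (le_of_eq (Finset.card_univ.trans (Fintype.card_fin n)))
  have hiff : ∀ i : Fin n, t ≤ dx i ↔ (i : ℕ) < M := antitone_ge_iff (antitone_sortDesc x) t
  have key1 : Emt dx t + t * M = psum dx M := by
    have hcM : t * M = ∑ i : Fin n, if (i : ℕ) < M then t else 0 := by
      rw [← Finset.sum_filter, Finset.sum_const, smul_eq_mul, card_lt_filter hMn, Nat.mul_comm]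
    rw [Emt, hcM, ← Finset.sum_add_distrib, psum]
    apply Finset.sum_congr rfl
    intro i _
    by_cases hi : (i : ℕ) < M
    · rw [if_pos hi, if_pos hi]
      have := (hiff i).mpr hi
      omega
    · rw [if_neg hi, if_neg hi]
      have : ¬ t ≤ dx i := fun hc => hi ((hiff i).mp hc)
      omega
  have key3 : psum dy M ≤ Emt dy t + t * M := by
    have hcM : t * M = ∑ i : Fin n, if (i : ℕ) < M then t else 0 := by
      rw [← Finset.sum_filter, Finset.sum_const, smul_eq_mul, card_lt_filter hMn, Nat.mul_comm]
    rw [Emt, hcM, ← Finset.sum_add_distrib, psum]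
    apply Finset.sum_le_sum
    intro i _
    split <;> omega
  have key2 := hw M
  omega

-- L7a : decomposition of Emt after adding indicator
lemma Emt_add_indicator {n τ : ℕ} (d : Fin n → ℕ) (p : Fin τ → Fin n)
    (hp : Function.Injective p) (t : ℕ) :
    Emt (fun i => d i + ∑ l : Fin τ, if p l = i then 1 else 0) t
      = Emt d t + (univ.filter fun l => t ≤ d (p l)).card := by
  have hβ : ∀ i, (∑ l : Fin τ, if p l = i then 1 else 0) ≤ 1 := by
    intro i
    rw [← Finset.card_filter]
    refine Finset.card_le_one.mpr ?_
    intro a ha b hb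
    simp only [mem_filter, mem_univ, true_and] at ha hb
    exact hp (ha.trans hb.symm)
  have hpt : Emt (fun i => d i + ∑ l : Fin τ, if p l = i then 1 else 0) t
      = Emt d t + ∑ i, (if t ≤ d i then (∑ l : Fin τ, if p l = i then 1 else 0) else 0) := by
    rw [Emt, Emt, ← Finset.sum_add_distrib]
    apply Finset.sum_congr rfl
    intro i _
    have := hβ i
    set b := (∑ l : Fin τ, if p l = i then 1 else 0) with hb
    split <;> omega
  rw [hpt]
  congr 1
  have step1 : ∀ i : Fin n, (if t ≤ d i then (∑ l : Fin τ, if p l = i then 1 else 0) else 0)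
      = ∑ l : Fin τ, if (p l = i ∧ t ≤ d i) then 1 else 0 := by
    intro i
    by_cases ht : t ≤ d i <;> simp [ht]
  rw [Finset.sum_congr rfl (fun i _ => step1 i), Finset.sum_comm, Finset.card_filter]
  apply Finset.sum_congr rfl
  intro l _
  rw [Finset.sum_eq_single (p l)]
  · simp
  · intro i _ hne
    rw [if_neg]
    rintro ⟨hc, -⟩
    exact hne hc.symm
  · intro hmem
    exact absurd (Finset.mem_univ _) hmem

-- key inequality
lemma key_ineq {n τ : ℕ} {x y : Fin n → ℕ} (h : Maj x y)
    (p q : Fin τ → Fin n) (hp : Function.Injective p) (hpq : ∀ l, q l ≤ p l) (t : ℕ) :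
    Emt (sortDesc x) t + (univ.filter fun l => t ≤ sortDesc x (p l)).card
      ≤ Emt (sortDesc y) t + (univ.filter fun l => t ≤ sortDesc y (q l)).card := by
  set dx := sortDesc x with hdx
  set dy := sortDesc y with hdy
  set M := (univ.filter fun i : Fin n => t ≤ dx i).card with hM
  set N := (univ.filter fun i : Fin n => t ≤ dy i).card with hN
  have hiffx : ∀ i, t ≤ dx i ↔ (i : ℕ) < M := antitone_ge_iff (antitone_sortDesc x) t
  have hiffy : ∀ i, t ≤ dy i ↔ (i : ℕ) < N := antitone_ge_iff (antitone_sortDesc y) t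
  have hCx : (univ.filter fun l => t ≤ dx (p l)) = (univ.filter fun l => ((p l : ℕ)) < M) := by
    ext l; simp [hiffx (p l)]
  have hCy : (univ.filter fun l => t ≤ dy (q l)) = (univ.filter fun l => ((q l : ℕ)) < N) := by
    ext l; simp [hiffy (q l)]
  rw [hCx, hCy]
  have hsplit : (univ.filter fun l => ((p l : ℕ)) < M).card ≤
      (univ.filter fun l => ((q l : ℕ)) < N).card +
      (univ.filter fun l => ((p l : ℕ)) < M ∧ ¬ ((p l : ℕ)) < N).card := by
    have hsub : (univ.filter fun l => ((p l : ℕ)) < M) ⊆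
        (univ.filter fun l => ((q l : ℕ)) < N) ∪
        (univ.filter fun l => ((p l : ℕ)) < M ∧ ¬ ((p l : ℕ)) < N) := by
      intro l hl
      simp only [mem_filter, mem_univ, true_and, Finset.mem_union] at hl ⊢
      by_cases hN' : ((p l : ℕ)) < N
      · exact Or.inl (lt_of_le_of_lt (by exact_mod_cast hpq l) hN')
      · exact Or.inr ⟨hl, hN'⟩
    exact le_trans (Finset.card_le_card hsub) (Finset.card_union_le _ _)
  have hB : (univ.filter fun l => ((p l : ℕ)) < M ∧ ¬ ((p l : ℕ)) < N).card ≤ M - N := by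
    rw [← Nat.card_Ico N M]
    apply Finset.card_le_card_of_injOn (fun l => ((p l : ℕ)))
    · intro l hl
      simp only [Finset.coe_filter, Set.mem_setOf_eq, mem_filter, mem_univ, true_and] at hl
      rw [Finset.mem_coe, Finset.mem_Ico]
      beta_reduce
      omega
    · intro a _ b _ hab
      exact hp (Fin.val_injective hab)
  have h1 : Emt dx t ≤ Emt dy t := Emt_le_of_weakSub h.1 t
  have h2 : Emt dx t + M ≤ Emt dy t + N := by
    by_cases ht : t = 0
    · subst ht
      have hMn : M = n := by
        rw [hM, Finset.filter_true_of_mem (fun i _ => Nat.zero_le _),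
          Finset.card_univ, Fintype.card_fin]
      have hNn : N = n := by
        rw [hN, Finset.filter_true_of_mem (fun i _ => Nat.zero_le _),
          Finset.card_univ, Fintype.card_fin]
      omega
    · obtain ⟨t', rfl⟩ : ∃ t', t = t' + 1 := ⟨t - 1, by omega⟩
      have h0 := Emt_le_of_weakSub h.1 t'
      rw [Emt_succ dx t', Emt_succ dy t', ← hM, ← hN] at h0
      exact h0
  omega

theorem stmt_8 {n τ : ℕ} (x y : Fin n → ℕ) (h : Maj x y)
    (p q : Fin τ → Fin n) (hp : Function.Injective p) (hq : Function.Injective q)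
    (hpq : ∀ l, q l ≤ p l) :
    Maj (fun i => sortDesc x i + ∑ l : Fin τ, if p l = i then 1 else 0)
        (fun i => sortDesc y i + ∑ l : Fin τ, if q l = i then 1 else 0) := by
  refine ⟨?_, ?_⟩
  · intro k
    obtain ⟨t, ht⟩ :=
      exists_psum_ge (fun i => sortDesc y i + ∑ l : Fin τ, if q l = i then 1 else 0) k
    refine le_trans (psum_le _ k t) (le_trans ?_ ht)
    apply Nat.add_le_add_left
    rw [Emt_add_indicator (sortDesc x) p hp t, Emt_add_indicator (sortDesc y) q hq t]
    exact key_ineq h p q hp hpq t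
  · have hcnt : ∀ (r : Fin τ → Fin n),
        (∑ i : Fin n, ∑ l : Fin τ, if r l = i then 1 else 0) = τ := by
      intro r
      rw [Finset.sum_comm]
      have inner : ∀ l : Fin τ, (∑ i : Fin n, if r l = i then 1 else 0) = 1 := by
        intro l; simp
      rw [Finset.sum_congr rfl (fun l _ => inner l), Finset.sum_const, smul_eq_mul,
        Finset.card_univ, Fintype.card_fin, mul_one]
    have hsx : ∑ i, sortDesc x i = ∑ i, x i := sum_comp_sortDesc x id
    have hsy : ∑ i, sortDesc y i = ∑ i, y i := sum_comp_sortDesc y id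
    simp only [Finset.sum_add_distrib, hcnt p, hcnt q, hsx, hsy, h.2]
end

section
/- Let c ∈ ℕ^n be nonincreasing and t ∈ ℕ^n be nonincreasing. If c is weakly supermajorized by t (c ≺^w t), then there exists x ∈ ℕ^n with x ≺ t and x ≤ c componentwise. -/
open Finset

/- ### Auxiliary lemmas -/

lemma sortAsc_of_antitone {n : ℕ} {α : Type*} [LinearOrder α] {f : Fin n → α}
    (hf : Antitone f) : sortAsc f = fun i => f i.rev := by
  have hm : Monotone (f ∘ (Fin.revPerm : Equiv.Perm (Fin n))) := by
    intro i j hij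
    exact hf (by simpa using Fin.rev_le_rev.mpr hij)
  have h := (Tuple.comp_sort_eq_comp_iff_monotone (σ := Fin.revPerm)).mpr hm
  funext i
  have := congrFun h i
  simp only [Function.comp_apply, Fin.revPerm_apply] at this
  simpa [sortAsc] using this.symm

lemma sortDesc_of_antitone {n : ℕ} {α : Type*} [LinearOrder α] {f : Fin n → α}
    (hf : Antitone f) : sortDesc f = f := by
  funext i
  simp [sortDesc, sortAsc_of_antitone hf, Fin.rev_rev]

lemma range_filter_lt (n k : ℕ) : (range n).filter (· < k) = range (min k n) := by
  ext a
  simp [Nat.lt_min, and_comm]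

lemma psum_eq_range {n : ℕ} (f : Fin n → ℕ) (k : ℕ) :
    psum f k = ∑ i ∈ range (min k n), if h : i < n then f ⟨i, h⟩ else 0 := by
  unfold psum
  have he : ∀ i : Fin n, (if (i : ℕ) < k then f i else 0)
      = (fun j => if j < k then (if h : j < n then f ⟨j, h⟩ else 0) else 0) (i : ℕ) := by
    intro i; simp [i.isLt]
  rw [Finset.sum_congr rfl (fun i _ => he i),
    Fin.sum_univ_eq_sum_range (fun j => if j < k then (if h : j < n then f ⟨j, h⟩ else 0) else 0),
    ← Finset.sum_filter, range_filter_lt]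

/-- The greedy partial-sum function. -/
def greedyX (T c' : ℕ → ℕ) : ℕ → ℕ
  | 0 => 0
  | k + 1 => min (T (k + 1)) (greedyX T c' k + c' k)

theorem stmt_10 {n : ℕ} (c t : Fin n → ℕ) (hc : Antitone c) (ht : Antitone t)
    (h : WeakSuper c t) :
    ∃ x : Fin n → ℕ, Maj x t ∧ x ≤ c := by
  classical
  set c' : ℕ → ℕ := fun i => if h : i < n then c ⟨i, h⟩ else 0 with hc'def
  set t' : ℕ → ℕ := fun i => if h : i < n then t ⟨i, h⟩ else 0 with ht'def
  have hc'anti : Antitone c' := by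
    intro i j hij
    by_cases hj : j < n
    · have hi : i < n := lt_of_le_of_lt hij hj
      simpa [hc'def, hi, hj] using hc (show (⟨i, hi⟩ : Fin n) ≤ ⟨j, hj⟩ from hij)
    · simp [hc'def, hj]
  have ht'anti : Antitone t' := by
    intro i j hij
    by_cases hj : j < n
    · have hi : i < n := lt_of_le_of_lt hij hj
      simpa [ht'def, hi, hj] using ht (show (⟨i, hi⟩ : Fin n) ≤ ⟨j, hj⟩ from hij)
    · simp [ht'def, hj]
  set T : ℕ → ℕ := fun k => ∑ i ∈ range k, t' i with hTdef
  set C : ℕ → ℕ := fun k => ∑ i ∈ range k, c' i with hCdef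
  have hTsucc : ∀ k, T (k + 1) = T k + t' k := fun k => Finset.sum_range_succ t' k
  have hCsucc : ∀ k, C (k + 1) = C k + c' k := fun k => Finset.sum_range_succ c' k
  have hTmono : Monotone T := fun i j hij =>
    Finset.sum_le_sum_of_subset (Finset.range_subset_range.mpr hij)
  -- translate the hypothesis into tail-sum form
  have key : ∀ j ≤ n, C j + T n ≤ T j + C n := by
    intro j hj
    have hm := h (n - j)
    rw [sortAsc_of_antitone hc, sortAsc_of_antitone ht, psum_eq_range, psum_eq_range] at hm
    have hmin : min (n - j) n = n - j := min_eq_left (Nat.sub_le n j)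
    rw [hmin] at hm
    have hrev : ∀ (f : Fin n → ℕ) (f' : ℕ → ℕ),
        (∀ i (hi : i < n), f' i = f ⟨i, hi⟩) →
        (∑ i ∈ range (n - j), if hh : i < n then f (⟨i, hh⟩ : Fin n).rev else 0)
          = ∑ i ∈ Finset.Ico j n, f' i := by
      intro f f' hf'
      rw [Finset.sum_Ico_eq_sum_range]
      have h1 : ∀ i ∈ range (n - j), (if hh : i < n then f (⟨i, hh⟩ : Fin n).rev else 0)
          = f' (n - 1 - i) := by
        intro i hi
        rw [Finset.mem_range] at hi
        have hin : i < n := lt_of_lt_of_le hi (Nat.sub_le n j)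
        have hrn : n - 1 - i < n := by omega
        rw [dif_pos hin, hf' _ hrn]
        congr 1
        ext
        simp only [Fin.rev]
        omega
      rw [Finset.sum_congr rfl h1]
      have h2 := Finset.sum_range_reflect (fun i => f' (j + i)) (n - j)
      have h3 : ∀ i ∈ range (n - j), f' (j + (n - j - 1 - i)) = f' (n - 1 - i) := by
        intro i hi
        rw [Finset.mem_range] at hi
        congr 1
        omega
      rw [Finset.sum_congr rfl h3] at h2
      exact h2
    rw [hrev t t' (fun i hi => by simp [ht'def, hi]),
        hrev c c' (fun i hi => by simp [hc'def, hi])] at hm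
    have hTt : T j + ∑ i ∈ Finset.Ico j n, t' i = T n := Finset.sum_range_add_sum_Ico t' hj
    have hCc : C j + ∑ i ∈ Finset.Ico j n, c' i = C n := Finset.sum_range_add_sum_Ico c' hj
    omega
  -- the greedy construction
  set X : ℕ → ℕ := greedyX T c' with hXdef
  have hX0 : X 0 = 0 := rfl
  have hXs : ∀ k, X (k + 1) = min (T (k + 1)) (X k + c' k) := fun k => rfl
  have hXT : ∀ k, X k ≤ T k := by
    intro k
    cases k with
    | zero => simp [hX0]
    | succ k => rw [hXs]; exact min_le_left _ _
  have hXmono : ∀ k, X k ≤ X (k + 1) := by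
    intro k
    rw [hXs]
    exact le_min ((hXT k).trans (hTmono (Nat.le_succ k))) (Nat.le_add_right _ _)
  have hXc : ∀ k, X (k + 1) ≤ X k + c' k := fun k => by rw [hXs]; exact min_le_right _ _
  -- X n = T n
  have key2 : ∀ k ≤ n, T n + C k ≤ X k + C n := by
    intro k hk
    induction k with
    | zero =>
      have := key 0 (Nat.zero_le n)
      have hC0 : C 0 = 0 := rfl
      have hT0 : T 0 = 0 := rfl
      omega
    | succ k ih =>
      have ih' := ih (le_of_lt hk)
      have hk1 := key (k + 1) hk
      have h1 := hXs k
      have h2 := hCsucc k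
      omega
  have hXn : X n = T n := by
    have h1 := hXT n
    have h2 := key2 n le_rfl
    omega
  -- the vector x
  set x : Fin n → ℕ := fun i => X ((i : ℕ) + 1) - X (i : ℕ) with hxdef
  have hxval : ∀ i (hi : i < n), x ⟨i, hi⟩ = X (i + 1) - X i := fun i hi => rfl
  -- x is antitone
  have hxe : ∀ k, X (k + 2) - X (k + 1) ≤ X (k + 1) - X k := by
    intro k
    have h1 := hXs k
    have h2 : X (k + 2) = min (T (k + 2)) (X (k + 1) + c' (k + 1)) := hXs (k + 1)
    have h3 := hXT k
    have h4 : X (k + 2) ≤ T (k + 2) := hXT (k + 2)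
    have h5 := hTsucc k
    have h6 : T (k + 2) = T (k + 1) + t' (k + 1) := hTsucc (k + 1)
    have h7 : c' (k + 1) ≤ c' k := hc'anti (Nat.le_succ k)
    have h8 : t' (k + 1) ≤ t' k := ht'anti (Nat.le_succ k)
    have h9 := hXmono k
    have h10 : X (k + 1) ≤ X (k + 2) := hXmono (k + 1)
    omega
  have hxe' : Antitone (fun k => X (k + 1) - X k) :=
    antitone_nat_of_succ_le (fun k => hxe k)
  have hxanti : Antitone x := by
    intro i j hij
    exact hxe' (show (i : ℕ) ≤ (j : ℕ) from hij)
  -- partial sums of x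
  have hpsumx : ∀ m, m ≤ n → (∑ i ∈ range m, if h : i < n then x ⟨i, h⟩ else 0) = X m := by
    intro m hm
    induction m with
    | zero => simp [hX0]
    | succ m ih =>
      rw [Finset.sum_range_succ, ih (le_of_lt hm), dif_pos (Nat.lt_of_succ_le hm)]
      have := hXmono m
      rw [hxval m (Nat.lt_of_succ_le hm)]
      omega
  have hpsumt : ∀ m, m ≤ n → (∑ i ∈ range m, if h : i < n then t ⟨i, h⟩ else 0) = T m := by
    intro m hm
    refine Finset.sum_congr rfl (fun i hi => ?_)
    have hin : i < n := lt_of_lt_of_le (Finset.mem_range.mp hi) hm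
    simp only [ht'def, dif_pos hin]
  refine ⟨x, ⟨?_, ?_⟩, ?_⟩
  · -- partial-sum inequalities
    intro k
    rw [sortDesc_of_antitone hxanti, sortDesc_of_antitone ht, psum_eq_range, psum_eq_range,
        hpsumx (min k n) (min_le_right k n), hpsumt (min k n) (min_le_right k n)]
    exact hXT (min k n)
  · -- equal totals
    have hfin : ∀ f : Fin n → ℕ,
        (∑ i, f i) = ∑ i ∈ range n, if h : i < n then f ⟨i, h⟩ else 0 := by
      intro f
      have h1 := psum_eq_range f n
      rw [min_self] at h1
      rw [← h1]
      unfold psum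
      exact Finset.sum_congr rfl (fun i _ => by simp [i.isLt])
    rw [hfin x, hfin t, hpsumx n le_rfl, hpsumt n le_rfl, hXn]
  · -- x ≤ c
    intro i
    have h1 := hXc (i : ℕ)
    have h2 : c' (i : ℕ) = c i := by simp [hc'def, i.isLt]
    show X ((i : ℕ) + 1) - X (i : ℕ) ≤ c i
    omega
end

section
/- Let c ∈ ℕ^n be nonincreasing and r ∈ ℕ^m, and let X = {x↓ : x ∈ ℕ^n, x ≺ r*, x ≤ c} be the canonical feasible set. If x, y ∈ X, then the meet z of x and y in the majorization lattice of partitions of Σ_i r_i also satisfies z ≤ c componentwise and z ≺ r*; hence z ∈ X. -/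
open Finset

/-- Partition conjugate of `r ∈ ℕ^m`, taken with dimension `n`:
its `j`-th entry (1-indexed `j+1`) counts the indices `i` with `r i ≥ j+1`. -/
def conj {m : ℕ} (r : Fin m → ℕ) (n : ℕ) : Fin n → ℕ :=
  fun j => (Finset.univ.filter fun i => (j : ℕ) + 1 ≤ r i).card

/-- Dominance order for (sorted) vectors: all leading partial sums compare. -/
def Dom {n : ℕ} (x y : Fin n → ℕ) : Prop :=
  ∀ k : ℕ, psum x k ≤ psum y k

/-- The candidate meet, defined via componentwise minima of leading partial sums. -/
def meetP {n : ℕ} (x y : Fin n → ℕ) : Fin n → ℕ :=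
  fun k => min (psum x ((k : ℕ) + 1)) (psum y ((k : ℕ) + 1))
      - min (psum x (k : ℕ)) (psum y (k : ℕ))

section helpers

lemma psum_zero {n : ℕ} (f : Fin n → ℕ) : psum f 0 = 0 := by
  simp [psum]

lemma psum_succ {n : ℕ} (f : Fin n → ℕ) (k : ℕ) :
    psum f (k + 1) = psum f k + if h : k < n then f ⟨k, h⟩ else 0 := by
  unfold psum
  have key : ∀ i : Fin n, (if (i : ℕ) < k + 1 then f i else 0)
      = (if (i : ℕ) < k then f i else 0) + (if (i : ℕ) = k then f i else 0) := by
    intro i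
    rcases lt_trichotomy (i : ℕ) k with h' | h' | h'
    · simp [h', Nat.lt_succ_of_lt h', Nat.ne_of_lt h']
    · simp [h', Nat.lt_irrefl]
    · simp [Nat.lt_asymm h', Nat.not_lt.mpr h', (Nat.ne_of_lt h').symm,
        Nat.not_lt.mpr (Nat.succ_le_of_lt h')]
  rw [Finset.sum_congr rfl (fun i _ => key i), Finset.sum_add_distrib]
  congr 1
  by_cases h : k < n
  · rw [dif_pos h]
    rw [Finset.sum_eq_single_of_mem ⟨k, h⟩ (Finset.mem_univ _)]
    · simp
    · intro j _ hj
      have : (j : ℕ) ≠ k := fun hc => hj (Fin.ext hc)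
      simp [this]
  · rw [dif_neg h]
    apply Finset.sum_eq_zero
    intro i _
    have : (i : ℕ) ≠ k := Nat.ne_of_lt (lt_of_lt_of_le i.isLt (Nat.not_lt.mp h))
    simp [this]

lemma psum_mono {n : ℕ} (f : Fin n → ℕ) : Monotone (psum f) := by
  intro a b hab
  apply Finset.sum_le_sum
  intro i _
  by_cases h : (i : ℕ) < a
  · simp [h, lt_of_lt_of_le h hab]
  · simp [h]

lemma psum_of_le {n : ℕ} (f : Fin n → ℕ) (k : ℕ) (h : n ≤ k) :
    psum f k = ∑ i, f i := by
  unfold psum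
  apply Finset.sum_congr rfl
  intro i _
  simp [lt_of_lt_of_le i.isLt h]

lemma sortDesc_of_antitone_s15 {n : ℕ} (x : Fin n → ℕ) (hx : Antitone x) :
    sortDesc x = x := by
  have hmono : Monotone (x ∘ Fin.revPerm) := by
    intro i j hij
    exact hx (Fin.rev_le_rev.mpr hij)
  have h1 : x ∘ Fin.revPerm = x ∘ Tuple.sort x :=
    Tuple.comp_sort_eq_comp_iff_monotone.mpr hmono
  funext i
  have := congrFun h1 i.rev
  simp only [Function.comp_apply, Fin.revPerm_apply, Fin.rev_rev] at this
  simpa [sortDesc, sortAsc] using this.symm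

lemma fin_antitone_of_succ_le {n : ℕ} (f : Fin n → ℕ)
    (h : ∀ k (hk : k + 1 < n), f ⟨k + 1, hk⟩ ≤ f ⟨k, Nat.lt_of_succ_lt hk⟩) :
    Antitone f := by
  intro a b hab
  obtain ⟨a, ha⟩ := a
  obtain ⟨b, hb⟩ := b
  have hab' : a ≤ b := hab
  clear hab
  induction b with
  | zero =>
    have : a = 0 := Nat.le_zero.mp hab'
    subst this; exact le_refl _
  | succ b ih =>
    rcases Nat.lt_or_ge a (b + 1) with h' | h'
    · have hb' : b < n := Nat.lt_of_succ_lt hb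
      calc f ⟨b + 1, hb⟩ ≤ f ⟨b, hb'⟩ := h b hb
        _ ≤ f ⟨a, ha⟩ := ih hb' (Nat.lt_succ_iff.mp h')
    · have : a = b + 1 := Nat.le_antisymm hab' h'
      subst this; exact le_refl _

lemma psum_meetP {n : ℕ} (x y : Fin n → ℕ) (k : ℕ) :
    psum (meetP x y) k = min (psum x k) (psum y k) := by
  induction k with
  | zero => simp [psum_zero]
  | succ k ih =>
    rw [psum_succ, ih]
    by_cases h : k < n
    · rw [dif_pos h]
      have hle : min (psum x k) (psum y k) ≤ min (psum x (k + 1)) (psum y (k + 1)) :=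
        le_min (le_trans (min_le_left _ _) (psum_mono x (Nat.le_succ k)))
          (le_trans (min_le_right _ _) (psum_mono y (Nat.le_succ k)))
      show min (psum x k) (psum y k) +
        (min (psum x (k + 1)) (psum y (k + 1)) - min (psum x k) (psum y k)) = _
      omega
    · rw [dif_neg h]
      have hn : n ≤ k := Nat.not_lt.mp h
      rw [psum_of_le x _ hn, psum_of_le y _ hn, psum_of_le x _ (Nat.le_succ_of_le hn),
        psum_of_le y _ (Nat.le_succ_of_le hn)]
      simp

lemma meetP_antitone {n : ℕ} (x y : Fin n → ℕ) (hx : Antitone x) (hy : Antitone y) :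
    Antitone (meetP x y) := by
  apply fin_antitone_of_succ_le
  intro k hk
  have hkn : k < n := Nat.lt_of_succ_lt hk
  have hx1 : psum x (k + 1) = psum x k + x ⟨k, hkn⟩ := by rw [psum_succ, dif_pos hkn]
  have hx2 : psum x (k + 2) = psum x (k + 1) + x ⟨k + 1, hk⟩ := by
    rw [psum_succ, dif_pos hk]
  have hy1 : psum y (k + 1) = psum y k + y ⟨k, hkn⟩ := by rw [psum_succ, dif_pos hkn]
  have hy2 : psum y (k + 2) = psum y (k + 1) + y ⟨k + 1, hk⟩ := by
    rw [psum_succ, dif_pos hk]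
  have hxa : x ⟨k + 1, hk⟩ ≤ x ⟨k, hkn⟩ := hx (by simp [Fin.le_def])
  have hya : y ⟨k + 1, hk⟩ ≤ y ⟨k, hkn⟩ := hy (by simp [Fin.le_def])
  show min (psum x (k + 2)) (psum y (k + 2)) - min (psum x (k + 1)) (psum y (k + 1))
      ≤ min (psum x (k + 1)) (psum y (k + 1)) - min (psum x k) (psum y k)
  omega

lemma conj_antitone {m n : ℕ} (r : Fin m → ℕ) : Antitone (conj r n) := by
  intro a b hab
  apply Finset.card_le_card
  intro i hi
  simp only [conj, Finset.mem_filter, Finset.mem_univ, true_and] at hi ⊢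
  have : (a : ℕ) ≤ b := hab
  omega

end helpers

theorem stmt_15 {m n : ℕ} (c : Fin n → ℕ) (hc : Antitone c) (r : Fin m → ℕ)
    (x y : Fin n → ℕ)
    (hx : Antitone x) (hxm : Maj x (conj r n)) (hxc : x ≤ c)
    (hy : Antitone y) (hym : Maj y (conj r n)) (hyc : y ≤ c) :
    meetP x y ≤ c ∧ Maj (meetP x y) (conj r n) := by
  have hxd := sortDesc_of_antitone_s15 x hx
  have hyd := sortDesc_of_antitone_s15 y hy
  have hzd := sortDesc_of_antitone_s15 (meetP x y) (meetP_antitone x y hx hy)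
  have hcd := sortDesc_of_antitone_s15 (conj r n) (conj_antitone r)
  constructor
  · -- meetP x y ≤ c
    intro k
    have hkn : (k : ℕ) < n := k.isLt
    have hx1 : psum x ((k : ℕ) + 1) = psum x (k : ℕ) + x k := by
      rw [psum_succ, dif_pos hkn]
    have hy1 : psum y ((k : ℕ) + 1) = psum y (k : ℕ) + y k := by
      rw [psum_succ, dif_pos hkn]
    have h1 : x k ≤ c k := hxc k
    have h2 : y k ≤ c k := hyc k
    show min (psum x ((k : ℕ) + 1)) (psum y ((k : ℕ) + 1))
        - min (psum x (k : ℕ)) (psum y (k : ℕ)) ≤ c k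
    omega
  · constructor
    · intro k
      rw [hzd, hcd, psum_meetP]
      have := hxm.1 k
      rw [hxd, hcd] at this
      exact le_trans (min_le_left _ _) this
    · have hsum : ∀ f : Fin n → ℕ, ∑ i, f i = psum f n := fun f => (psum_of_le f n le_rfl).symm
      show ∑ i, meetP x y i = ∑ i, conj r n i
      rw [← psum_of_le (meetP x y) n le_rfl, psum_meetP, psum_of_le x n le_rfl,
        psum_of_le y n le_rfl, hxm.2, hym.2, min_self]
end

section
/- Let b ∈ ℕ^n be nonincreasing and r ∈ ℕ^m. Define V = {b + x : x ∈ ℕ^n, x ≺ r*}, the attainable set of the valley-filling problem. If v ∈ V, then the nonincreasing rearrangement v↓ is also in V. -/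
open Finset

namespace ValleyAux
variable {n : ℕ}

def sortPerm (y : Fin n → ℕ) : Equiv.Perm (Fin n) := Fin.revPerm.trans (Tuple.sort y)

lemma sortDesc_eq_comp (y : Fin n → ℕ) : sortDesc y = y ∘ (sortPerm y) := rfl

lemma sum_sortDesc (y : Fin n → ℕ) : ∑ i, sortDesc y i = ∑ i, y i := by
  rw [sortDesc_eq_comp]; exact Equiv.sum_comp (sortPerm y) y

lemma antitone_sortDesc (y : Fin n → ℕ) : Antitone (sortDesc y) := by
  intro i j hij
  exact Tuple.monotone_sort y (Fin.rev_le_rev.mpr hij)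

lemma sortAsc_comp_perm (y : Fin n → ℕ) (σ : Equiv.Perm (Fin n)) :
    sortAsc (y ∘ σ) = sortAsc y := Tuple.comp_perm_comp_sort_eq_comp_sort

lemma sortDesc_comp_perm (y : Fin n → ℕ) (σ : Equiv.Perm (Fin n)) :
    sortDesc (y ∘ σ) = sortDesc y := by
  funext i
  show sortAsc (y ∘ σ) i.rev = sortAsc y i.rev
  rw [sortAsc_comp_perm]

lemma sortDesc_of_antitone {v : Fin n → ℕ} (hv : Antitone v) : sortDesc v = v := by
  have hw : Monotone (v ∘ Fin.revPerm) := by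
    intro i j hij
    exact hv (Fin.rev_le_rev.mpr hij)
  have h1 : sortAsc (v ∘ Fin.revPerm) = v ∘ Fin.revPerm := by
    unfold sortAsc
    rw [Tuple.sort_eq_refl_iff_monotone.mpr hw]; rfl
  have h2 : sortAsc v = v ∘ Fin.revPerm := by
    have hvv : (v ∘ Fin.revPerm) ∘ (Fin.revPerm : Equiv.Perm (Fin n)) = v := by
      funext i
      show v i.rev.rev = v i
      rw [Fin.rev_rev]
    have := sortAsc_comp_perm (v ∘ Fin.revPerm) Fin.revPerm
    rw [h1] at this
    rw [← this, hvv]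
  funext i
  show sortAsc v i.rev = v i
  rw [h2]
  show v i.rev.rev = v i
  rw [Fin.rev_rev]

lemma psum_eq_sum_filter (f : Fin n → ℕ) (k : ℕ) :
    psum f k = ∑ i ∈ univ.filter (fun i : Fin n => (i : ℕ) < k), f i :=
  (Finset.sum_filter _ _).symm

lemma psum_mono (f : Fin n → ℕ) {k k' : ℕ} (h : k ≤ k') : psum f k ≤ psum f k' :=
  Finset.sum_le_sum fun i _ => by split_ifs <;> omega

lemma psum_succ (f : Fin n → ℕ) (k : ℕ) :
    psum f (k + 1) = psum f k + (if h : k < n then f ⟨k, h⟩ else 0) := by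
  unfold psum
  have h1 : ∀ i : Fin n, (if (i : ℕ) < k + 1 then f i else 0)
      = (if (i : ℕ) < k then f i else 0) + (if (i : ℕ) = k then f i else 0) := by
    intro i; split_ifs <;> omega
  rw [Finset.sum_congr rfl fun i _ => h1 i, Finset.sum_add_distrib]
  congr 1
  by_cases h : k < n
  · have hfil : (univ.filter fun i : Fin n => (i : ℕ) = k) = {⟨k, h⟩} := by
      ext i; simp [Fin.ext_iff]
    rw [← Finset.sum_filter, hfil, Finset.sum_singleton, dif_pos h]
  · rw [dif_neg h]
    apply Finset.sum_eq_zero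
    intro i _
    have : (i : ℕ) ≠ k := by omega
    simp [this]

def M (y : Fin n → ℕ) (k : ℕ) : ℕ :=
  (univ.powerset.filter fun S : Finset (Fin n) => S.card ≤ k).sup fun S => ∑ i ∈ S, y i

lemma sum_le_M (y : Fin n → ℕ) (k : ℕ) (S : Finset (Fin n)) (hS : S.card ≤ k) :
    ∑ i ∈ S, y i ≤ M y k :=
  Finset.le_sup (f := fun S : Finset (Fin n) => ∑ i ∈ S, y i) (by simp [hS])

lemma M_le (y : Fin n → ℕ) (k c : ℕ)
    (h : ∀ S : Finset (Fin n), S.card ≤ k → ∑ i ∈ S, y i ≤ c) : M y k ≤ c :=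
  Finset.sup_le fun S hS => h S (by simpa using (Finset.mem_filter.mp hS).2)

lemma sum_subset_le_psum {w : Fin n → ℕ} (hw : Antitone w) :
    ∀ (k : ℕ) (T : Finset (Fin n)), T.card ≤ k → ∑ i ∈ T, w i ≤ psum w k := by
  intro k
  induction k with
  | zero => intro T hT; simp at hT; simp [hT]
  | succ k ih =>
    intro T hT
    rcases Nat.lt_or_ge T.card (k + 1) with h | h
    · exact le_trans (ih T (by omega)) (psum_mono w (by omega))
    · have hc : T.card = k + 1 := by omega
      have hne : T.Nonempty := Finset.card_pos.mp (by omega)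
      set i := T.max' hne with hi
      have hiT : i ∈ T := T.max'_mem hne
      have hki : k ≤ (i : ℕ) := by
        have hmem : ∀ j ∈ T, (j : ℕ) ∈ Finset.range ((i : ℕ) + 1) := by
          intro j hj
          simp only [Finset.mem_range]
          have := T.le_max' j hj
          omega
        have hinj : Set.InjOn (fun j : Fin n => (j : ℕ)) ↑T := by
          intro a _ b _ hab; exact Fin.ext hab
        have hsub : T.card ≤ (Finset.range ((i : ℕ) + 1)).card :=
          Finset.card_le_card_of_injOn _ hmem hinj
        rw [Finset.card_range] at hsub; omega
      have hkn : k < n := lt_of_le_of_lt hki i.isLt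
      have hle : w i ≤ w ⟨k, hkn⟩ := hw (by exact hki)
      rw [← Finset.add_sum_erase T w hiT, psum_succ, dif_pos hkn]
      have herase : (T.erase i).card ≤ k := by
        rw [Finset.card_erase_of_mem hiT]; omega
      have := ih (T.erase i) herase
      omega

lemma psum_sortDesc_le_M (y : Fin n → ℕ) (k : ℕ) : psum (sortDesc y) k ≤ M y k := by
  rw [psum_eq_sum_filter, sortDesc_eq_comp]
  set F := univ.filter (fun i : Fin n => (i : ℕ) < k) with hF
  have hcard : F.card ≤ k := by
    have hmem : ∀ j ∈ F, (j : ℕ) ∈ Finset.range k := by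
      intro j hj
      simp only [hF, Finset.mem_filter] at hj
      simp [hj.2]
    have hinj : Set.InjOn (fun j : Fin n => (j : ℕ)) ↑F := by
      intro a _ b _ hab; exact Fin.ext hab
    have := Finset.card_le_card_of_injOn _ hmem hinj
    simpa using this
  have himg : ∑ i ∈ F, (y ∘ sortPerm y) i = ∑ j ∈ F.image (sortPerm y), y j :=
    (Finset.sum_image (fun a _ b _ h => (sortPerm y).injective h)).symm
  rw [himg]
  exact sum_le_M _ _ _ (le_trans Finset.card_image_le hcard)

lemma M_le_psum_sortDesc (y : Fin n → ℕ) (k : ℕ) : M y k ≤ psum (sortDesc y) k := by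
  apply M_le
  intro S hS
  have hkey : ∑ j ∈ S.image (sortPerm y).symm, sortDesc y j = ∑ i ∈ S, y i := by
    rw [sortDesc_eq_comp,
      Finset.sum_image (fun a _ b _ h => (sortPerm y).symm.injective h)]
    exact Finset.sum_congr rfl fun i _ => by simp
  rw [← hkey]
  exact sum_subset_le_psum (antitone_sortDesc y) k _ (le_trans Finset.card_image_le hS)

lemma psum_sortDesc_eq_M (y : Fin n → ℕ) (k : ℕ) : psum (sortDesc y) k = M y k :=
  le_antisymm (psum_sortDesc_le_M y k) (M_le_psum_sortDesc y k)

lemma key (b : Fin n → ℕ) (hb : Antitone b) (c : Fin n → ℕ) :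
    ∀ (N : ℕ) (v : Fin n → ℕ), (∑ l : Fin n, (l : ℕ) * v l) ≤ N →
      (∃ x : Fin n → ℕ, Maj x c ∧ v = fun i => b i + x i) →
      ∃ x : Fin n → ℕ, Maj x c ∧ sortDesc v = fun i => b i + x i := by
  intro N
  induction N using Nat.strong_induction_on with
  | _ N ih =>
  intro v hN hv
  obtain ⟨x, hmaj, hvx⟩ := hv
  have hvp : ∀ l, v l = b l + x l := fun l => congrFun hvx l
  by_cases hmono : Antitone v
  · exact ⟨x, hmaj, by rw [sortDesc_of_antitone hmono]; exact hvx⟩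
  · -- find an inversion
    have : ∃ i j : Fin n, i ≤ j ∧ v i < v j := by
      by_contra hcon
      push_neg at hcon
      exact hmono fun i j hij => hcon i j hij
    obtain ⟨i, j, hij, hlt⟩ := this
    have hijne : i ≠ j := by rintro rfl; exact absurd hlt (lt_irrefl _)
    have hijlt : (i : ℕ) < (j : ℕ) := lt_of_le_of_ne (by exact hij) (fun h => hijne (Fin.ext h))
    have hbji : b j ≤ b i := hb hij
    have hbivi : b i ≤ v i := by rw [hvp i]; omega
    have hbjvj : b j ≤ v j := by rw [hvp j]; omega
    set w : Fin n → ℕ := v ∘ Equiv.swap i j with hw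
    set x'' : Fin n → ℕ :=
      Function.update (Function.update x i (v j - b i)) j (v i - b j) with hx''
    have hxxi : x'' i = v j - b i := by
      rw [hx'', Function.update_of_ne hijne, Function.update_self]
    have hxxj : x'' j = v i - b j := by
      rw [hx'', Function.update_self]
    have hxx : ∀ l, l ≠ i → l ≠ j → x'' l = x l := by
      intro l hli hlj
      rw [hx'', Function.update_of_ne hlj, Function.update_of_ne hli]
    have hxi : x i = v i - b i := by rw [hvp i]; omega
    have hxj : x j = v j - b j := by rw [hvp j]; omega
    have hwrepr : w = fun l => b l + x'' l := by
      funext l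
      by_cases hli : l = i
      · subst hli
        show v (Equiv.swap l j l) = b l + x'' l
        rw [Equiv.swap_apply_left, hxxi]
        omega
      · by_cases hlj : l = j
        · subst hlj
          show v (Equiv.swap i l l) = b l + x'' l
          rw [Equiv.swap_apply_right, hxxj]
          omega
        · show v (Equiv.swap i j l) = b l + x'' l
          rw [Equiv.swap_apply_of_ne_of_ne hli hlj, hxx l hli hlj]
          exact hvp l
    -- sum of x'' equals sum of x
    have hsum : ∑ l, x'' l = ∑ l, x l := by
      have h1 : ∑ l, w l = ∑ l, v l := Equiv.sum_comp (Equiv.swap i j) v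
      have h2 : ∑ l, (b l + x'' l) = ∑ l, (b l + x l) := by
        rw [← hvx]
        calc ∑ l, (b l + x'' l) = ∑ l, w l := by rw [hwrepr]
          _ = ∑ l, v l := h1
      rw [Finset.sum_add_distrib, Finset.sum_add_distrib] at h2
      omega
    -- M x'' k ≤ M x k
    have hM : ∀ k, M x'' k ≤ M x k := by
      intro k
      apply M_le
      intro S hS
      by_cases hiS : i ∈ S <;> by_cases hjS : j ∈ S
      · -- both in S
        have hjS' : j ∈ S.erase i := Finset.mem_erase.mpr ⟨Ne.symm hijne, hjS⟩
        have hrest : ∑ l ∈ (S.erase i).erase j, x'' l = ∑ l ∈ (S.erase i).erase j, x l := by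
          apply Finset.sum_congr rfl
          intro l hl
          have hl1 := Finset.ne_of_mem_erase hl
          have hl2 := Finset.ne_of_mem_erase (Finset.mem_of_mem_erase hl)
          exact hxx l hl2 hl1
        have heq : ∑ l ∈ S, x'' l = ∑ l ∈ S, x l := by
          rw [← Finset.add_sum_erase S x'' hiS, ← Finset.add_sum_erase _ x'' hjS',
            ← Finset.add_sum_erase S x hiS, ← Finset.add_sum_erase _ x hjS', hrest,
            hxxi, hxxj, hxi, hxj]
          omega
        rw [heq]
        exact sum_le_M _ _ _ hS
      · -- i ∈ S, j ∉ S
        have hjS' : j ∉ S.erase i := fun h => hjS (Finset.mem_of_mem_erase h)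
        have hrest : ∑ l ∈ S.erase i, x'' l = ∑ l ∈ S.erase i, x l := by
          apply Finset.sum_congr rfl
          intro l hl
          exact hxx l (Finset.ne_of_mem_erase hl) (fun h => hjS (h ▸ Finset.mem_of_mem_erase hl))
        have hcard : (insert j (S.erase i)).card ≤ k := by
          rw [Finset.card_insert_of_notMem hjS', Finset.card_erase_of_mem hiS]
          have : 0 < S.card := Finset.card_pos.mpr ⟨i, hiS⟩
          omega
        calc ∑ l ∈ S, x'' l = x'' i + ∑ l ∈ S.erase i, x'' l :=
              (Finset.add_sum_erase S x'' hiS).symm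
          _ ≤ x j + ∑ l ∈ S.erase i, x l := by
              rw [hrest]
              have : x'' i ≤ x j := by rw [hxxi, hxj]; omega
              omega
          _ = ∑ l ∈ insert j (S.erase i), x l := (Finset.sum_insert hjS').symm
          _ ≤ M x k := sum_le_M _ _ _ hcard
      · -- j ∈ S, i ∉ S
        have hrest : ∑ l ∈ S.erase j, x'' l = ∑ l ∈ S.erase j, x l := by
          apply Finset.sum_congr rfl
          intro l hl
          exact hxx l (fun h => hiS (h ▸ Finset.mem_of_mem_erase hl)) (Finset.ne_of_mem_erase hl)
        calc ∑ l ∈ S, x'' l = x'' j + ∑ l ∈ S.erase j, x'' l :=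
              (Finset.add_sum_erase S x'' hjS).symm
          _ ≤ x j + ∑ l ∈ S.erase j, x l := by
              rw [hrest]
              have : x'' j ≤ x j := by rw [hxxj, hxj]; omega
              omega
          _ = ∑ l ∈ S, x l := Finset.add_sum_erase S x hjS
          _ ≤ M x k := sum_le_M _ _ _ hS
      · -- neither
        have heq : ∑ l ∈ S, x'' l = ∑ l ∈ S, x l := by
          apply Finset.sum_congr rfl
          intro l hl
          exact hxx l (fun h => hiS (h ▸ hl)) (fun h => hjS (h ▸ hl))
        rw [heq]
        exact sum_le_M _ _ _ hS
    have hmaj'' : Maj x'' c := by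
      constructor
      · intro k
        calc psum (sortDesc x'') k = M x'' k := psum_sortDesc_eq_M x'' k
          _ ≤ M x k := hM k
          _ = psum (sortDesc x) k := (psum_sortDesc_eq_M x k).symm
          _ ≤ psum (sortDesc c) k := hmaj.1 k
      · rw [hsum]; exact hmaj.2
    -- measure decreases
    have hmeas : ∑ l : Fin n, (l : ℕ) * w l < ∑ l : Fin n, (l : ℕ) * v l := by
      have e1 := Equiv.sum_comp (Equiv.swap i j)
        (fun l => ((Equiv.swap i j l : Fin n) : ℕ) * v l)
      simp only [Equiv.swap_apply_self] at e1
      have e2 : ∑ l : Fin n, (l : ℕ) * w l = ∑ l, ((Equiv.swap i j l : Fin n) : ℕ) * v l := e1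
      rw [e2]
      have hjU : j ∈ (univ : Finset (Fin n)).erase i :=
        Finset.mem_erase.mpr ⟨Ne.symm hijne, Finset.mem_univ j⟩
      have hrest : ∑ l ∈ ((univ : Finset (Fin n)).erase i).erase j,
          ((Equiv.swap i j l : Fin n) : ℕ) * v l
          = ∑ l ∈ ((univ : Finset (Fin n)).erase i).erase j, (l : ℕ) * v l := by
        apply Finset.sum_congr rfl
        intro l hl
        have hl1 := Finset.ne_of_mem_erase hl
        have hl2 := Finset.ne_of_mem_erase (Finset.mem_of_mem_erase hl)
        rw [Equiv.swap_apply_of_ne_of_ne hl2 hl1]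
      rw [← Finset.add_sum_erase univ (fun l => ((Equiv.swap i j l : Fin n) : ℕ) * v l)
          (Finset.mem_univ i),
        ← Finset.add_sum_erase _ (fun l => ((Equiv.swap i j l : Fin n) : ℕ) * v l) hjU,
        ← Finset.add_sum_erase univ (fun l : Fin n => (l : ℕ) * v l) (Finset.mem_univ i),
        ← Finset.add_sum_erase _ (fun l : Fin n => (l : ℕ) * v l) hjU, hrest]
      simp only [Equiv.swap_apply_left, Equiv.swap_apply_right]
      have hstep : (j : ℕ) * v i + (i : ℕ) * v j < (i : ℕ) * v i + (j : ℕ) * v j := by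
        obtain ⟨d, hd⟩ : ∃ d, (j : ℕ) = (i : ℕ) + d + 1 := ⟨(j : ℕ) - (i : ℕ) - 1, by omega⟩
        obtain ⟨e, he⟩ : ∃ e, v j = v i + e + 1 := ⟨v j - v i - 1, by omega⟩
        rw [hd, he]
        ring_nf
        nlinarith [Nat.zero_le (d * e)]
      omega
    have hres := ih (∑ l : Fin n, (l : ℕ) * w l) (lt_of_lt_of_le hmeas hN) w le_rfl
      ⟨x'', hmaj'', hwrepr⟩
    rwa [hw, sortDesc_comp_perm v (Equiv.swap i j)] at hres

end ValleyAux

theorem stmt_17 {m n : ℕ} (b : Fin n → ℕ) (hb : Antitone b)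
    (r : Fin m → ℕ) (hr : ∀ i, r i ≤ n) (v : Fin n → ℕ)
    (hv : ∃ x : Fin n → ℕ, Maj x (conj r n) ∧ v = fun i => b i + x i) :
    ∃ x : Fin n → ℕ, Maj x (conj r n) ∧ sortDesc v = fun i => b i + x i :=
  ValleyAux.key b hb (conj r n) (∑ l : Fin n, (l : ℕ) * v l) v le_rfl hv
end
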